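/- Let q be a prime power, k ≥ 2 an integer, and t = ⌊(k+2)/4⌋. If u and v are adjacent vertices of the graph D(k,q), then a_r(u) = a_r(v) for every r with 2 ≤ r ≤ t; consequently a(u) = a(v). -/

import Mathlib

/-- Extend a vector `Fin k → F` to `ℕ → F` by zeros. -/
def extD {F : Type} [Zero F] {k : ℕ} (v : Fin k → F) : ℕ → F :=
  fun m => if h : m < k then v ⟨m, h⟩ else 0

/-- Right-hand side of the `m`-th incidence equation of `D(k,q)`
(coordinates are numbered from `0`, so the `m`-th equation concerns the
coordinate with index `m`). -/
def rhsD {F : Type} [Mul F] (p l : ℕ → F) : ℕ → F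
  | 1 => l 0 * p 0
  | 2 => l 1 * p 0
  | m => if m % 4 = 0 ∨ m % 4 = 3 then l 0 * p (m - 2) else l (m - 2) * p 0

/-- The incidence relation between a point `p` and a line `l`:
the first `k - 1` incidence equations hold. -/
def incD {F : Type} [Field F] (k : ℕ) (p l : Fin k → F) : Prop :=
  ∀ m, 1 ≤ m → m < k → extD l m - extD p m = rhsD (extD p) (extD l) m

/-- The bipartite graph `D(k,q)`; vertices are points (`Sum.inl`) and
lines (`Sum.inr`), both copies of `GF(q)^k`. -/
def DGraph (k : ℕ) (F : Type) [Field F] :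
    SimpleGraph ((Fin k → F) ⊕ (Fin k → F)) where
  Adj x y :=
    match x, y with
    | Sum.inl p, Sum.inr l => incD k p l
    | Sum.inr l, Sum.inl p => incD k p l
    | Sum.inl _, Sum.inl _ => False
    | Sum.inr _, Sum.inr _ => False
  symm := by constructor; rintro (p | l) (p' | l') h <;> exact h
  loopless := by constructor; rintro (p | l) h <;> exact h


/-- `u_{ii}` (with the convention `u_{00} = -1`). -/
def ddD {F : Type} [Field F] (u : ℕ → F) : ℕ → F
  | 0 => -1
  | 1 => u 1
  | (i + 2) => u (4 * i + 4)

/-- `u'_{ii}` (with the conventions `u'_{00} = 1`, `u'_{11} = u_{11}`). -/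
def dd'D {F : Type} [Field F] (u : ℕ → F) : ℕ → F
  | 0 => 1
  | 1 => u 1
  | (i + 2) => u (4 * i + 5)

/-- `u_{i,i+1}`; for a point `p_{01} = p_1`, for a line `l_{01} = 0`. -/
def hiD {F : Type} [Field F] (isPt : Bool) (u : ℕ → F) : ℕ → F
  | 0 => if isPt then u 0 else 0
  | 1 => u 2
  | (i + 2) => u (4 * i + 6)

/-- `u_{i,i-1}`; `u_{0,-1} = 0`, and for a point `p_{10} = 0`,
for a line `l_{10} = l_1`. -/
def loD {F : Type} [Field F] (isPt : Bool) (u : ℕ → F) : ℕ → F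
  | 0 => 0
  | 1 => if isPt then 0 else u 0
  | (i + 2) => u (4 * i + 3)

/-- The invariant `a_r(x)` of a vertex `x` of `D(k,q)`. -/
def aD {F : Type} [Field F] {k : ℕ} (r : ℕ) (x : (Fin k → F) ⊕ (Fin k → F)) : F :=
  ∑ i ∈ Finset.range (r + 1),
    (ddD (extD (Sum.elim id id x)) i * dd'D (extD (Sum.elim id id x)) (r - i) -
      hiD x.isLeft (extD (Sum.elim id id x)) i * loD x.isLeft (extD (Sum.elim id id x)) (r - i))

/-- The vector `a(x) = (a_2(x), …, a_t(x))`. -/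
def aVecD {F : Type} [Field F] {k : ℕ} (t : ℕ) (x : (Fin k → F) ⊕ (Fin k → F)) :
    Fin (t - 1) → F :=
  fun j => aD (j.val + 2) x

section AuxD

variable {F : Type} [Field F] {k : ℕ}

/-- shifted `u_{i,i+1}` for a point: `phfD P (i+1) = p_{i,i+1}`, `phfD P 0 = 0`. -/
def phfD (P : ℕ → F) : ℕ → F
  | 0 => 0
  | (j+1) => hiD true P j

/-- shifted `u'_{ii}` for a point: `pvfD P (j+1) = p'_{jj}`, `pvfD P 0 = 0`. -/
def pvfD (P : ℕ → F) : ℕ → F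
  | 0 => 0
  | (j+1) => dd'D P j

lemma rhsD_ge3 {F : Type} [Mul F] (p l : ℕ → F) (m : ℕ) (hm : 3 ≤ m) :
    rhsD p l m = if m % 4 = 0 ∨ m % 4 = 3 then l 0 * p (m - 2) else l (m - 2) * p 0 := by
  match m, hm with
  | (m+3), _ => rfl

lemma relA (hk : 2 ≤ k) {p l : Fin k → F} (h : incD k p l) {i : ℕ}
    (h1 : 1 ≤ i) (hik : 4 * i ≤ k + 2) :
    ddD (extD l) i = ddD (extD p) i + extD l 0 * phfD (extD p) i := by
  match i, h1 with
  | 1, _ =>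
    have e : extD l 1 - extD p 1 = extD l 0 * extD p 0 := h 1 le_rfl (by omega)
    show extD l 1 = extD p 1 + extD l 0 * extD p 0
    linear_combination e
  | 2, _ =>
    have e := h 4 (by omega) (by omega)
    rw [rhsD_ge3 _ _ 4 (by omega)] at e
    norm_num at e
    show extD l 4 = extD p 4 + extD l 0 * extD p 2
    linear_combination e
  | (i+3), _ =>
    have e := h (4*i+8) (by omega) (by omega)
    rw [rhsD_ge3 _ _ _ (by omega)] at e
    have hm : (4*i+8) % 4 = 0 := by omega
    rw [if_pos (Or.inl hm)] at e
    show extD l (4*(i+1)+4) = extD p (4*(i+1)+4) + extD l 0 * extD p (4*i+6)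
    have e1 : 4*(i+1)+4 = 4*i+8 := by ring
    have e2 : 4*i+8-2 = 4*i+6 := by omega
    rw [e1]
    rw [e2] at e
    linear_combination e

lemma relA' (hk : 2 ≤ k) {p l : Fin k → F} (h : incD k p l) {i : ℕ}
    (hik : 4 * i ≤ k + 2) :
    ddD (extD l) i = ddD (extD p) i + extD l 0 * phfD (extD p) i := by
  rcases Nat.eq_zero_or_pos i with h0 | h1
  · subst h0
    show (-1 : F) = -1 + extD l 0 * 0
    ring
  · exact relA hk h h1 hik

lemma relB (hk : 2 ≤ k) {p l : Fin k → F} (h : incD k p l) {j : ℕ}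
    (h1 : 1 ≤ j) (hjk : 4 * j ≤ k + 2) :
    dd'D (extD l) j = dd'D (extD p) j + loD false (extD l) j * extD p 0 := by
  match j, h1 with
  | 1, _ =>
    have e : extD l 1 - extD p 1 = extD l 0 * extD p 0 := h 1 le_rfl (by omega)
    show extD l 1 = extD p 1 + extD l 0 * extD p 0
    linear_combination e
  | 2, _ =>
    have e := h 5 (by omega) (by omega)
    rw [rhsD_ge3 _ _ 5 (by omega)] at e
    norm_num at e
    show extD l 5 = extD p 5 + extD l 3 * extD p 0
    linear_combination e
  | (j+3), _ =>
    have e := h (4*j+9) (by omega) (by omega)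
    rw [rhsD_ge3 _ _ _ (by omega)] at e
    have hm1 : ¬((4*j+9) % 4 = 0 ∨ (4*j+9) % 4 = 3) := by omega
    rw [if_neg hm1] at e
    show extD l (4*(j+1)+5) = extD p (4*(j+1)+5) + extD l (4*(j+1)+3) * extD p 0
    have e1 : 4*(j+1)+5 = 4*j+9 := by ring
    have e2 : 4*j+9-2 = 4*(j+1)+3 := by omega
    rw [e1]
    rw [e2] at e
    linear_combination e

lemma relC (hk : 2 ≤ k) {p l : Fin k → F} (h : incD k p l) {i : ℕ}
    (hik : 4 * i + 2 ≤ k) :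
    hiD false (extD l) i = hiD true (extD p) i + ddD (extD l) i * extD p 0 := by
  match i with
  | 0 =>
    show (0 : F) = extD p 0 + (-1) * extD p 0
    ring
  | 1 =>
    have e : extD l 2 - extD p 2 = extD l 1 * extD p 0 := h 2 (by omega) (by omega)
    show extD l 2 = extD p 2 + extD l 1 * extD p 0
    linear_combination e
  | (i+2) =>
    have e := h (4*i+6) (by omega) (by omega)
    rw [rhsD_ge3 _ _ _ (by omega)] at e
    have hm1 : ¬((4*i+6) % 4 = 0 ∨ (4*i+6) % 4 = 3) := by omega
    rw [if_neg hm1] at e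
    show extD l (4*i+6) = extD p (4*i+6) + extD l (4*i+4) * extD p 0
    have e2 : 4*i+6-2 = 4*i+4 := by omega
    rw [e2] at e
    linear_combination e

lemma relD (hk : 2 ≤ k) {p l : Fin k → F} (h : incD k p l) {j : ℕ}
    (h1 : 1 ≤ j) (hjk : 4 * j ≤ k + 2) :
    loD false (extD l) j = loD true (extD p) j + extD l 0 * pvfD (extD p) j := by
  match j, h1 with
  | 1, _ =>
    show extD l 0 = 0 + extD l 0 * 1
    ring
  | 2, _ =>
    have e := h 3 (by omega) (by omega)
    rw [rhsD_ge3 _ _ 3 (by omega)] at e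
    norm_num at e
    show extD l 3 = extD p 3 + extD l 0 * extD p 1
    linear_combination e
  | (j+3), _ =>
    have e := h (4*j+7) (by omega) (by omega)
    rw [rhsD_ge3 _ _ _ (by omega)] at e
    have hm : (4*j+7) % 4 = 3 := by omega
    rw [if_pos (Or.inr hm)] at e
    show extD l (4*(j+1)+3) = extD p (4*(j+1)+3) + extD l 0 * extD p (4*j+5)
    have e1 : 4*(j+1)+3 = 4*j+7 := by ring
    have e2 : 4*j+7-2 = 4*j+5 := by omega
    rw [e1]
    rw [e2] at e
    linear_combination e

lemma keyD (hk : 2 ≤ k) {p l : Fin k → F} (h : incD k p l) {r : ℕ}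
    (hr2 : 2 ≤ r) (hrk : 4 * r ≤ k + 2) :
    aD r (Sum.inl p : (Fin k → F) ⊕ (Fin k → F)) = aD r (Sum.inr l) := by
  have main : ∀ i ∈ Finset.range (r+1),
      (ddD (extD l) i * dd'D (extD l) (r-i)
          - hiD false (extD l) i * loD false (extD l) (r-i))
        - (ddD (extD p) i * dd'D (extD p) (r-i)
          - hiD true (extD p) i * loD true (extD p) (r-i))
      = extD l 0 * (phfD (extD p) i * pvfD (extD p) (r+1-i)
          - phfD (extD p) (i+1) * pvfD (extD p) (r+1-(i+1))) := by
    intro i hi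
    rw [Finset.mem_range, Nat.lt_succ_iff] at hi
    rcases eq_or_lt_of_le hi with hir | hir
    · subst hir
      have e0 : i - i = 0 := Nat.sub_self i
      have e1 : i + 1 - i = 1 := by omega
      have e2 : i + 1 - (i + 1) = 0 := by omega
      rw [e0, e1, e2]
      have hA := relA hk h (i := i) (by omega) (by omega)
      rw [hA]
      have v0 : pvfD (extD p) 0 = 0 := rfl
      have v1 : pvfD (extD p) 1 = 1 := rfl
      have w1 : dd'D (extD l) 0 = 1 := rfl
      have w2 : dd'D (extD p) 0 = 1 := rfl
      have w3 : loD false (extD l) 0 = 0 := rfl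
      have w4 : loD true (extD p) 0 = 0 := rfl
      rw [v0, v1, w1, w2, w3, w4]
      have hph : phfD (extD p) i = hiD true (extD p) (i - 1) := by
        match i, hr2 with
        | (n+2), _ => rfl
      rw [hph]
      ring
    · obtain ⟨j, hj⟩ : ∃ j, r - i = j + 1 := ⟨r - i - 1, by omega⟩
      have hj1 : r + 1 - i = j + 2 := by omega
      have hj2 : r + 1 - (i + 1) = j + 1 := by omega
      rw [hj, hj1, hj2]
      have hB := relB hk h (j := j+1) (by omega) (by omega)
      have hD := relD hk h (j := j+1) (by omega) (by omega)
      have hC := relC hk h (i := i) (by omega)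
      have hA := relA' hk h (i := i) (by omega)
      rw [hB, hD, hC, hA]
      have hphi : phfD (extD p) (i+1) = hiD true (extD p) i := rfl
      have hpv : pvfD (extD p) (j+2) = dd'D (extD p) (j+1) := rfl
      rw [hphi, hpv]
      ring
  have e1 : aD r (Sum.inr l : (Fin k → F) ⊕ (Fin k → F)) - aD r (Sum.inl p)
      = extD l 0 * (phfD (extD p) 0 * pvfD (extD p) (r+1-0)
          - phfD (extD p) (r+1) * pvfD (extD p) (r+1-(r+1))) := by
    rw [aD, aD]
    simp only [Sum.elim_inl, Sum.elim_inr, Sum.isLeft_inl, Sum.isLeft_inr, id_eq]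
    rw [← Finset.sum_sub_distrib, Finset.sum_congr rfl main, ← Finset.mul_sum,
      Finset.sum_range_sub' (fun i => phfD (extD p) i * pvfD (extD p) (r+1-i))]
  have e2 : aD r (Sum.inr l : (Fin k → F) ⊕ (Fin k → F)) - aD r (Sum.inl p) = 0 := by
    rw [e1]
    have : pvfD (extD p) (r+1-(r+1)) = 0 := by rw [Nat.sub_self]; rfl
    rw [this]
    show extD l 0 * ((0:F) * pvfD (extD p) (r+1-0) - phfD (extD p) (r+1) * 0) = 0
    ring
  exact (sub_eq_zero.mp e2).symm

end AuxD

/-- If `u` and `v` are adjacent vertices of `D(k,q)` then `a_r(u) = a_r(v)` for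
all `2 ≤ r ≤ t` where `t = ⌊(k+2)/4⌋`; consequently `a(u) = a(v)`. -/
theorem statement5 (q k : ℕ) (hk : 2 ≤ k) (F : Type) [Field F] [Fintype F]
    (hF : Fintype.card F = q) (u v : (Fin k → F) ⊕ (Fin k → F))
    (huv : (DGraph k F).Adj u v) :
    (∀ r, 2 ≤ r → r ≤ (k + 2) / 4 → aD r u = aD r v) ∧
    aVecD ((k + 2) / 4) u = aVecD ((k + 2) / 4) v := by
  have htr : ∀ r, 2 ≤ r → r ≤ (k + 2) / 4 → aD r u = aD r v := by
    intro r h2 h4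
    have hrk : 4 * r ≤ k + 2 := by
      have := (Nat.le_div_iff_mul_le (by norm_num : 0 < 4)).mp h4
      omega
    match u, v, huv with
    | Sum.inl p, Sum.inr l, h => exact keyD hk h h2 hrk
    | Sum.inr l, Sum.inl p, h => exact (keyD hk h h2 hrk).symm
  refine ⟨htr, ?_⟩
  funext j
  exact htr (j.val + 2) (by omega) (by have := j.isLt; omega)
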